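/- Let q, d, D be positive integers with q ≥ d+1 and D ≤ d, and for each i ∈ [D] let x_i = (x_{i,1},…,x_{i,q}) be a probability vector with entries in [0, 1/(q−d)]. Then ∑_{j=1}^q ∏_{i=1}^D (1 − x_{i,j}) ≤ d + (q−d)(1 − 1/(q−d))^D. -/

import Mathlib

/-- AM-GM: product of nonneg reals is at most (mean)^D. -/
lemma amgm_aux (D : ℕ) (hD : 1 ≤ D) (z : Fin D → ℝ) (hz : ∀ i, 0 ≤ z i) :
    ∏ i, z i ≤ ((∑ i, z i) / D) ^ D := by
  have hDpos : (0:ℝ) < D := by exact_mod_cast hD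
  have h := Real.geom_mean_le_arith_mean_weighted Finset.univ (fun _ => (D:ℝ)⁻¹) z
    (fun i _ => by positivity) (by
      simp [Finset.sum_const, Finset.card_univ]
      field_simp) (fun i _ => hz i)
  have key : ∏ i, z i = (∏ i, z i ^ ((D:ℝ)⁻¹)) ^ D := by
    rw [← Finset.prod_pow]
    refine Finset.prod_congr rfl fun i _ => ?_
    rw [← Real.rpow_natCast (z i ^ ((D:ℝ)⁻¹)) D, ← Real.rpow_mul (hz i),
      inv_mul_cancel₀ (ne_of_gt hDpos), Real.rpow_one]
  rw [key]
  have hRHS : ∑ i, (D:ℝ)⁻¹ * z i = (∑ i, z i) / D := by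
    rw [← Finset.mul_sum]; ring
  rw [hRHS] at h
  exact pow_le_pow_left₀ (Finset.prod_nonneg fun i _ => Real.rpow_nonneg (hz i) _) h D

/-- Chord bound from convexity of `t ↦ t^D` on `[0,∞)`. -/
lemma chord_aux (D : ℕ) (r z : ℝ) (hr : 1 ≤ r) (hz0 : 0 ≤ z) (hzc : z ≤ 1 / r) :
    (1 - z) ^ D ≤ (1 - z * r) + z * r * (1 - 1 / r) ^ D := by
  have hrpos : (0:ℝ) < r := lt_of_lt_of_le one_pos hr
  have hc1 : (1:ℝ) / r ≤ 1 := by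
    rw [div_le_one hrpos]; exact hr
  have hzr : z * r ≤ 1 := by
    have := mul_le_mul_of_nonneg_right hzc (le_of_lt hrpos)
    rwa [div_mul_cancel₀ 1 (ne_of_gt hrpos)] at this
  have h := (convexOn_pow D).2 (Set.mem_Ici.2 (by norm_num : (0:ℝ) ≤ 1))
    (Set.mem_Ici.2 (by linarith : (0:ℝ) ≤ 1 - 1 / r))
    (by linarith : (0:ℝ) ≤ 1 - z * r)
    (by positivity : (0:ℝ) ≤ z * r) (by ring)
  have heq : (1 - z * r) • (1:ℝ) + (z * r) • (1 - 1 / r) = 1 - z := by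
    have : z * r * (1 / r) = z := by field_simp
    simp only [smul_eq_mul]; nlinarith [this]
  rw [heq] at h
  simpa [smul_eq_mul] using h

/-- If `q ≥ d+1`, `1 ≤ D ≤ d`, and `x_1,…,x_D` are probability vectors
with entries in `[0, 1/(q−d)]`, then `∑_j ∏_i (1 − x_{i,j}) ≤ d + (q−d)(1 − 1/(q−d))^D`. -/
theorem stmt6 (q d D : ℕ) (hq : d + 1 ≤ q) (hD1 : 1 ≤ D) (hDd : D ≤ d)
    (x : Fin D → Fin q → ℝ)
    (hx0 : ∀ i j, 0 ≤ x i j) (hxU : ∀ i j, x i j ≤ 1 / ((q : ℝ) - d))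
    (hx1 : ∀ i, ∑ j, x i j = 1) :
    ∑ j, ∏ i, (1 - x i j) ≤ (d : ℝ) + ((q : ℝ) - d) * (1 - 1 / ((q : ℝ) - d)) ^ D := by
  set r : ℝ := (q:ℝ) - d with hrdef
  have hr : 1 ≤ r := by
    have : (d:ℝ) + 1 ≤ q := by exact_mod_cast hq
    simp [hrdef]; linarith
  have hrpos : (0:ℝ) < r := lt_of_lt_of_le one_pos hr
  have hDpos : (0:ℝ) < D := by exact_mod_cast hD1
  set z : Fin q → ℝ := fun j => (∑ i, x i j) / D with hzdef
  have hz0 : ∀ j, 0 ≤ z j := fun j =>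
    div_nonneg (Finset.sum_nonneg fun i _ => hx0 i j) (le_of_lt hDpos)
  have hzc : ∀ j, z j ≤ 1 / r := by
    intro j
    have hs : ∑ i, x i j ≤ (D:ℝ) * (1 / r) := by
      calc ∑ i, x i j ≤ ∑ _i : Fin D, (1 / r) := Finset.sum_le_sum fun i _ => hxU i j
        _ = (D:ℝ) * (1 / r) := by simp [Finset.sum_const, mul_comm]
    rw [hzdef, div_le_iff₀ hDpos]
    calc ∑ i, x i j ≤ (D:ℝ) * (1 / r) := hs
      _ = 1 / r * D := by ring
  -- AM-GM step
  have step1 : ∀ j, ∏ i, (1 - x i j) ≤ (1 - z j) ^ D := by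
    intro j
    have h := amgm_aux D hD1 (fun i => 1 - x i j) (fun i => by
      have h1 := hxU i j
      have : (1:ℝ) / r ≤ 1 := by rw [div_le_one hrpos]; exact hr
      show (0:ℝ) ≤ 1 - x i j
      linarith)
    have hsum : (∑ i, (1 - x i j)) / (D:ℝ) = 1 - z j := by
      rw [Finset.sum_sub_distrib, Finset.sum_const, Finset.card_univ, Fintype.card_fin]
      rw [nsmul_eq_mul, mul_one, hzdef, sub_div, div_self (ne_of_gt hDpos)]
    rwa [hsum] at h
  -- chord step and summation
  have step2 : ∀ j, (1 - z j) ^ D ≤ (1 - z j * r) + z j * r * (1 - 1 / r) ^ D :=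
    fun j => chord_aux D r (z j) hr (hz0 j) (hzc j)
  have hzsum : ∑ j, z j = 1 := by
    rw [hzdef, ← Finset.sum_div, Finset.sum_comm]
    simp only [hx1]
    rw [Finset.sum_const, Finset.card_univ, Fintype.card_fin]
    field_simp
    simp
  calc ∑ j, ∏ i, (1 - x i j)
      ≤ ∑ j, ((1 - z j * r) + z j * r * (1 - 1 / r) ^ D) :=
        Finset.sum_le_sum fun j _ => le_trans (step1 j) (step2 j)
    _ = (q:ℝ) - (∑ j, z j) * r + (∑ j, z j) * r * (1 - 1 / r) ^ D := by
        rw [Finset.sum_add_distrib, Finset.sum_sub_distrib, Finset.sum_const,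
          Finset.card_univ, Fintype.card_fin, ← Finset.sum_mul, ← Finset.sum_mul,
          nsmul_eq_mul, mul_one]
        simp only [Finset.sum_mul]
    _ = (d:ℝ) + r * (1 - 1 / r) ^ D := by rw [hzsum, hrdef]; ring
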